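/- Let Σ be a positive semidefinite matrix indexed by a finite set V, and let A, B, C ⊆ V be disjoint. If the Schur complement condition holds — namely Σ_{A∪C, B∪C} has rank |C| and Σ_{C,C} is invertible — then Σ_{A,B} = Σ_{A,C} Σ_{C,C}^{-1} Σ_{C,B}. -/
import Mathlib

open Matrix

lemma rank_submatrix_le_gen {l m o p : Type} [Fintype l] [Fintype m] [Fintype o] [Fintype p]
    [DecidableEq l] [DecidableEq m]
    (M : Matrix l m ℝ) (f : o → l) (g : p → m) :
    (M.submatrix f g).rank ≤ M.rank := by
  have h : M.submatrix f g =
      (1 : Matrix l l ℝ).submatrix f id * M * (1 : Matrix m m ℝ).submatrix id g := by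
    ext i j
    simp [Matrix.mul_apply, Matrix.one_apply, Finset.sum_ite_eq, Finset.sum_ite_eq']
  rw [h]
  exact le_trans (Matrix.rank_mul_le_left _ _) (Matrix.rank_mul_le_right _ _)

lemma rank_submatrix_equiv {l m o p : Type} [Fintype l] [Fintype m] [Fintype o] [Fintype p]
    [DecidableEq l] [DecidableEq m] [DecidableEq o] [DecidableEq p]
    (M : Matrix l m ℝ) (e₁ : o ≃ l) (e₂ : p ≃ m) :
    (M.submatrix e₁ e₂).rank = M.rank := by
  refine le_antisymm (rank_submatrix_le_gen M e₁ e₂) ?_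
  have : M = (M.submatrix e₁ e₂).submatrix e₁.symm e₂.symm := by
    ext i j; simp
  conv_lhs => rw [this]
  exact rank_submatrix_le_gen _ _ _

lemma schur_zero_of_rank {l m n : Type} [Fintype l] [Fintype m] [Fintype n] [DecidableEq n]
    (P : Matrix l m ℝ) (Q : Matrix l n ℝ) (R : Matrix n m ℝ) (S : Matrix n n ℝ)
    (hS : IsUnit S) (hr : (fromBlocks P Q R S).rank = Fintype.card n) :
    P = Q * S⁻¹ * R := by
  classical
  have hDet : IsUnit S.det := (Matrix.isUnit_iff_isUnit_det S).mp hS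
  obtain ⟨iS⟩ := hS.nonempty_invertible
  have hfac := Matrix.fromBlocks_eq_of_invertible₂₂ P Q R S
  set Z := P - Q * ⅟S * R with hZ
  have hr2 : (fromBlocks Z 0 0 S).rank = Fintype.card n := by
    have h1 : IsUnit (fromBlocks (1 : Matrix l l ℝ) (Q * ⅟S) 0 1).det := by
      rw [Matrix.det_fromBlocks_zero₂₁]; simp
    have h2 : IsUnit (fromBlocks (1 : Matrix m m ℝ) 0 (⅟S * R) 1).det := by
      rw [Matrix.det_fromBlocks_zero₁₂]; simp
    rw [hfac, Matrix.rank_mul_eq_left_of_isUnit_det _ _ h2,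
      Matrix.rank_mul_eq_right_of_isUnit_det _ _ h1] at hr
    exact hr
  have hZ0 : Z = 0 := by
    ext a b
    by_contra hab
    have hsub : ((fromBlocks Z 0 0 S).submatrix
        (Sum.map (fun _ : Unit => a) id) (Sum.map (fun _ : Unit => b) id)) =
        fromBlocks (Matrix.of fun _ _ : Unit => Z a b) 0 0 S := by
      ext i j
      rcases i with i | i <;> rcases j with j | j <;> rfl
    have hd : IsUnit ((fromBlocks (Matrix.of fun _ _ : Unit => Z a b) 0 0 S)).det := by
      rw [Matrix.det_fromBlocks_zero₂₁, Matrix.det_unique]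
      exact (isUnit_iff_ne_zero.mpr hab).mul hDet
    have hrk : ((fromBlocks (Matrix.of fun _ _ : Unit => Z a b) 0 0 S)).rank
        = Fintype.card (Unit ⊕ n) :=
      Matrix.rank_of_isUnit _ ((Matrix.isUnit_iff_isUnit_det _).mpr hd)
    have hle := rank_submatrix_le_gen (fromBlocks Z 0 0 S)
      (Sum.map (fun _ : Unit => a) id) (Sum.map (fun _ : Unit => b) id)
    rw [hsub, hrk, hr2] at hle
    simp [Fintype.card_sum] at hle
  have hPQ : P = Q * ⅟S * R := sub_eq_zero.mp hZ0
  rwa [Matrix.invOf_eq_nonsing_inv] at hPQ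

/-- Equiv between a disjoint union of finsets and the sum of their coercions. -/
noncomputable def finsetUnionEquiv {V : Type} [DecidableEq V] {A C : Finset V}
    (h : Disjoint A C) : ↥A ⊕ ↥C ≃ ↥(A ∪ C) where
  toFun := Sum.elim (fun a => ⟨a, Finset.mem_union_left _ a.2⟩)
    (fun c => ⟨c, Finset.mem_union_right _ c.2⟩)
  invFun := fun x => if hx : (x : V) ∈ A then Sum.inl ⟨x, hx⟩ else
    Sum.inr ⟨x, (Finset.mem_union.mp x.2).resolve_left hx⟩
  left_inv := by
    rintro (a | c)
    · simp
    · have : (c : V) ∉ A := fun hc => (Finset.disjoint_left.mp h) hc c.2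
      simp [this]
  right_inv := by
    intro x
    by_cases hx : (x : V) ∈ A <;> simp [hx]

theorem stmt8 (V : Type) [Fintype V] [DecidableEq V]
    (Cov : Matrix V V ℝ) (hpsd : Cov.PosSemidef)
    (A B C : Finset V)
    (hAB : Disjoint A B) (hAC : Disjoint A C) (hBC : Disjoint B C)
    (hrank : (Cov.submatrix (fun i : ↥(A ∪ C) => (i : V))
      (fun j : ↥(B ∪ C) => (j : V))).rank = C.card)
    (hinv : IsUnit (Cov.submatrix (fun i : ↥C => (i : V)) (fun j : ↥C => (j : V)))) :
    Cov.submatrix (fun i : ↥A => (i : V)) (fun j : ↥B => (j : V)) =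
      Cov.submatrix (fun i : ↥A => (i : V)) (fun j : ↥C => (j : V)) *
        (Cov.submatrix (fun i : ↥C => (i : V)) (fun j : ↥C => (j : V)))⁻¹ *
        Cov.submatrix (fun i : ↥C => (i : V)) (fun j : ↥B => (j : V)) := by
  classical
  set M := Cov.submatrix (fun i : ↥(A ∪ C) => (i : V)) (fun j : ↥(B ∪ C) => (j : V)) with hM
  have hNM : (M.submatrix (finsetUnionEquiv hAC) (finsetUnionEquiv hBC)) =
      fromBlocks
        (Cov.submatrix (fun i : ↥A => (i : V)) (fun j : ↥B => (j : V)))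
        (Cov.submatrix (fun i : ↥A => (i : V)) (fun j : ↥C => (j : V)))
        (Cov.submatrix (fun i : ↥C => (i : V)) (fun j : ↥B => (j : V)))
        (Cov.submatrix (fun i : ↥C => (i : V)) (fun j : ↥C => (j : V))) := by
    ext i j
    rcases i with a | c <;> rcases j with b | c' <;> rfl
  have hrk : (fromBlocks
        (Cov.submatrix (fun i : ↥A => (i : V)) (fun j : ↥B => (j : V)))
        (Cov.submatrix (fun i : ↥A => (i : V)) (fun j : ↥C => (j : V)))
        (Cov.submatrix (fun i : ↥C => (i : V)) (fun j : ↥B => (j : V)))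
        (Cov.submatrix (fun i : ↥C => (i : V)) (fun j : ↥C => (j : V)))).rank
      = Fintype.card ↥C := by
    rw [← hNM, rank_submatrix_equiv, hrank, Fintype.card_coe]
  exact schur_zero_of_rank _ _ _ _ hinv hrk
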